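/- For integers n ≥ 2 and m ≥ 1, let φ_n(m) denote the unique integer r with 1 ≤ r ≤ n and m ≡ r (mod n). If φ_n(m) < n, then φ_{n−1}(m − ⌊(m−1)/n⌋) = φ_n(m); and if φ_n(m) = n, then φ_{n−1}(m − ⌊(m−1)/n⌋) = 1. -/
import Mathlib


/-- `phi n m` is the unique `r` with `1 ≤ r ≤ n` and `m ≡ r [MOD n]`. -/
def phi (n m : ℕ) : ℕ := if m % n = 0 then n else m % n

theorem phi_pred_of_floor (n m : ℕ) (hn : 2 ≤ n) (hm : 1 ≤ m) :
    (phi n m < n → phi (n - 1) (m - (m - 1) / n) = phi n m) ∧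
    (phi n m = n → phi (n - 1) (m - (m - 1) / n) = 1) := by
  obtain ⟨k, rfl⟩ := Nat.exists_eq_add_of_le hn
  set q := (m - 1) / (2 + k) with hq
  set r := (m - 1) % (2 + k) with hr
  have hdm : (2 + k) * q + r = m - 1 := Nat.div_add_mod _ _
  have hrlt : r < 2 + k := Nat.mod_lt _ (by omega)
  have hmul : (2 + k) * q = (1 + k) * q + q := by ring
  have hm' : m = (2 + k) * q + (r + 1) := by omega
  have hm2 : m - q = (1 + k) * q + (r + 1) := by omega
  have h1 : m % (2 + k) = (r + 1) % (2 + k) := by rw [hm', Nat.mul_add_mod]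
  have h2 : (m - q) % (1 + k) = (r + 1) % (1 + k) := by rw [hm2, Nat.mul_add_mod]
  have hsub : 2 + k - 1 = 1 + k := by omega
  unfold phi
  rw [hsub, h1, h2]
  rcases Nat.lt_or_ge (r + 1) (1 + k) with h | h
  · rw [Nat.mod_eq_of_lt h, Nat.mod_eq_of_lt (show r + 1 < 2 + k by omega)]
    constructor <;> intro hx <;> split_ifs at hx ⊢ <;>
        first | omega | exact absurd hx (by omega) | exact (by assumption : False).elim
  · rcases Nat.eq_or_lt_of_le h with h' | h'
    · rw [← h', Nat.mod_self, Nat.mod_eq_of_lt (show 1 + k < 2 + k by omega)]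
      constructor <;> intro hx <;> split_ifs at hx ⊢ <;>
        first | omega | exact absurd hx (by omega) | exact (by assumption : False).elim
    · have h'' : r + 1 = 2 + k := by omega
      rw [h'', Nat.mod_self]
      have h3 : (2 + k) % (1 + k) = 1 % (1 + k) := by
        conv_lhs => rw [show 2 + k = 1 + (1 + k) by omega]
        rw [Nat.add_mod_right]
      rw [h3]
      rcases Nat.eq_zero_or_pos k with rfl | hk
      · norm_num
      · rw [Nat.mod_eq_of_lt (show 1 < 1 + k by omega)]
        constructor <;> intro hx <;> split_ifs at hx ⊢ <;>
        first | omega | exact absurd hx (by omega) | exact (by assumption : False).elim
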